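/- Define, for pairs of indices, M(p₁,q₁; p₂,q₂) = ρ_{p₁q₂} ρ_{q₁p₂} + ρ_{p₁p₂} ρ_{q₁q₂}, and for k ∈ {2, 3, 4} let S(k) = Σ over all (p₁,q₁,p₂,q₂) with 1 ≤ p_d < q_d ≤ m (d = 1, 2) and |{p₁,q₁,p₂,q₂}| = k, of M(p₁,q₁; p₂,q₂)². Then there exists a universal constant C > 0 such that for every m and every m×m correlation matrix R: | S(2) − m(m−1)/2 | ≤ C ‖R − I_m‖_F²; S(3) ≤ C ( m ‖R − I_m‖_F² + ‖R − I_m‖_F⁴ ); and S(4) ≤ C ‖R − I_m‖_F⁴. -/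

import Mathlib

open Finset
set_option maxHeartbeats 1000000

noncomputable section

/-- `R` is an `m × m` (Pearson) correlation matrix: symmetric positive semidefinite
with unit diagonal. -/
def IsCorrMatrix {m : ℕ} (R : Matrix (Fin m) (Fin m) ℝ) : Prop :=
  R.PosSemidef ∧ ∀ p, R p p = 1

/-- The Frobenius norm `‖R - I_m‖_F`. -/
def frobDistId {m : ℕ} (R : Matrix (Fin m) (Fin m) ℝ) : ℝ :=
  Real.sqrt (∑ p, ∑ q, (R p q - if p = q then (1 : ℝ) else 0) ^ 2)

/-- `M(p₁,q₁; p₂,q₂) = ρ_{p₁q₂} ρ_{q₁p₂} + ρ_{p₁p₂} ρ_{q₁q₂}`, where a pair of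
indices is encoded as an element of `Fin m × Fin m`. -/
def Mmom {m : ℕ} (R : Matrix (Fin m) (Fin m) ℝ) (x y : Fin m × Fin m) : ℝ :=
  R x.1 y.2 * R x.2 y.1 + R x.1 y.1 * R x.2 y.2

/-- `S(k)`: the sum of `M(p₁,q₁; p₂,q₂)²` over all `(p₁,q₁,p₂,q₂)` with
`p_d < q_d` (`d = 1, 2`) and `|{p₁,q₁,p₂,q₂}| = k`. -/
def Ssum {m : ℕ} (R : Matrix (Fin m) (Fin m) ℝ) (k : ℕ) : ℝ :=
  ∑ x ∈ (Finset.univ : Finset ((Fin m × Fin m) × (Fin m × Fin m))).filter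
      (fun x => x.1.1 < x.1.2 ∧ x.2.1 < x.2.2 ∧
        ({x.1.1, x.1.2, x.2.1, x.2.2} : Finset (Fin m)).card = k),
    Mmom R x.1 x.2 ^ 2

/-! ### Auxiliary lemmas -/

lemma entry_sq_le_one {m : ℕ} {R : Matrix (Fin m) (Fin m) ℝ}
    (hpsd : R.PosSemidef) (hdiag : ∀ p, R p p = 1) (p q : Fin m) :
    R p q ^ 2 ≤ 1 := by
  rcases eq_or_ne p q with rfl | hpq
  · simp [hdiag p]
  have hsym : R q p = R p q := by
    have h := congrFun (congrFun hpsd.1.symm q) p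
    simpa [Matrix.conjTranspose_apply] using h
  have key : ∀ c : ℝ, 0 ≤ 1 + 2 * c * R p q + c ^ 2 := by
    intro c
    set v : Fin m → ℝ := fun i => (if i = p then (1:ℝ) else 0) + c * (if i = q then 1 else 0) with hv
    have h := hpsd.dotProduct_mulVec_nonneg v
    simp only [dotProduct, Matrix.mulVec, Pi.star_apply, star_trivial, hv] at h
    simp only [mul_add, add_mul, Finset.sum_add_distrib, Finset.mul_sum, mul_ite, ite_mul,
      mul_one, mul_zero, zero_mul, one_mul, Finset.sum_ite_eq', Finset.mem_univ, if_true] at h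
    simp only [hpq, Ne.symm hpq, if_false, hdiag, hsym] at h
    nlinarith [h]
  nlinarith [key 1, key (-1)]

lemma sum_prod_mul {m : ℕ} (f g : Fin m → Fin m → ℝ) :
    ∑ y : (Fin m × Fin m) × (Fin m × Fin m), f y.1.1 y.1.2 * g y.2.1 y.2.2
      = (∑ a, ∑ b, f a b) * (∑ a, ∑ b, g a b) := by
  rw [Fintype.sum_prod_type]
  simp only [← Fintype.sum_prod_type]
  rw [← Finset.sum_mul_sum]
  simp [Fintype.sum_prod_type]

lemma sum_factor1 {m : ℕ} (f g : Fin m → Fin m → ℝ) :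
    ∑ x : (Fin m × Fin m) × (Fin m × Fin m), f x.1.1 x.2.2 * g x.1.2 x.2.1
      = (∑ a, ∑ b, f a b) * (∑ a, ∑ b, g a b) := by
  rw [← sum_prod_mul f g]
  exact Fintype.sum_equiv
    ⟨fun x => ((x.1.1, x.2.2), (x.1.2, x.2.1)), fun y => ((y.1.1, y.2.1), (y.2.2, y.1.2)),
      fun x => rfl, fun y => rfl⟩ _ _ (fun x => rfl)

lemma sum_factor2 {m : ℕ} (f g : Fin m → Fin m → ℝ) :
    ∑ x : (Fin m × Fin m) × (Fin m × Fin m), f x.1.1 x.2.1 * g x.1.2 x.2.2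
      = (∑ a, ∑ b, f a b) * (∑ a, ∑ b, g a b) := by
  rw [← sum_prod_mul f g]
  exact Fintype.sum_equiv
    ⟨fun x => ((x.1.1, x.2.1), (x.1.2, x.2.2)), fun y => ((y.1.1, y.2.1), (y.1.2, y.2.2)),
      fun x => rfl, fun y => rfl⟩ _ _ (fun x => rfl)

lemma sum_diag1 {m : ℕ} (g : Fin m → Fin m → ℝ) :
    ∑ x : (Fin m × Fin m) × (Fin m × Fin m), (if x.1.1 = x.2.2 then g x.1.2 x.2.1 else 0)
      = (m : ℝ) * ∑ a, ∑ b, g a b := by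
  rw [Fintype.sum_prod_type]
  simp only [Fintype.sum_prod_type]
  have h : ∀ p1 : Fin m, ∑ q1 : Fin m, ∑ p2 : Fin m, ∑ q2 : Fin m,
      (if p1 = q2 then g q1 p2 else 0) = ∑ a, ∑ b, g a b := by
    intro p1
    refine Finset.sum_congr rfl fun q1 _ => Finset.sum_congr rfl fun p2 _ => ?_
    simp
  simp only [h]
  simp [Finset.sum_const, nsmul_eq_mul]

lemma sum_diag2 {m : ℕ} (g : Fin m → Fin m → ℝ) :
    ∑ x : (Fin m × Fin m) × (Fin m × Fin m), (if x.1.2 = x.2.1 then g x.1.1 x.2.2 else 0)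
      = (m : ℝ) * ∑ a, ∑ b, g a b := by
  rw [← sum_diag1 g]
  exact Fintype.sum_equiv
    ⟨fun x => ((x.1.2, x.1.1), (x.2.2, x.2.1)), fun y => ((y.1.2, y.1.1), (y.2.2, y.2.1)),
      fun x => rfl, fun y => rfl⟩ _ _ (fun x => rfl)

lemma sum_diag3 {m : ℕ} (g : Fin m → Fin m → ℝ) :
    ∑ x : (Fin m × Fin m) × (Fin m × Fin m), (if x.1.1 = x.2.1 then g x.1.2 x.2.2 else 0)
      = (m : ℝ) * ∑ a, ∑ b, g a b := by
  rw [← sum_diag1 g]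
  exact Fintype.sum_equiv
    ⟨fun x => ((x.1.1, x.1.2), (x.2.2, x.2.1)), fun y => ((y.1.1, y.1.2), (y.2.2, y.2.1)),
      fun x => rfl, fun y => rfl⟩ _ _ (fun x => rfl)

lemma sum_diag4 {m : ℕ} (g : Fin m → Fin m → ℝ) :
    ∑ x : (Fin m × Fin m) × (Fin m × Fin m), (if x.1.2 = x.2.2 then g x.1.1 x.2.1 else 0)
      = (m : ℝ) * ∑ a, ∑ b, g a b := by
  rw [← sum_diag1 g]
  exact Fintype.sum_equiv
    ⟨fun x => ((x.1.2, x.1.1), (x.2.1, x.2.2)), fun y => ((y.1.2, y.1.1), (y.2.1, y.2.2)),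
      fun x => rfl, fun y => rfl⟩ _ _ (fun x => rfl)


lemma card_pair_le {α : Type*} [DecidableEq α] (a b : α) :
    ({a, b} : Finset α).card ≤ 2 :=
  le_trans (Finset.card_insert_le _ _) (by simp)

lemma card_triple_le {α : Type*} [DecidableEq α] (a b c : α) :
    ({a, b, c} : Finset α).card ≤ 3 :=
  le_trans (Finset.card_insert_le _ _) (by have := card_pair_le b c; omega)

lemma card4_ne {α : Type*} [DecidableEq α] {a b c e : α}
    (h : ({a, b, c, e} : Finset α).card = 4) :
    a ≠ b ∧ a ≠ c ∧ a ≠ e ∧ b ≠ c ∧ b ≠ e ∧ c ≠ e := by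
  have key : ∀ u v w : α, ({a, b, c, e} : Finset α) ⊆ {u, v, w} → False := by
    intro u v w hsub
    have h1 := Finset.card_le_card hsub
    have h2 := card_triple_le u v w
    omega
  refine ⟨fun h' => key b c e ?_, fun h' => key b c e ?_, fun h' => key b c e ?_,
          fun h' => key a c e ?_, fun h' => key a c e ?_, fun h' => key a b e ?_⟩ <;>
    (subst h'; intro x hx; simp at hx ⊢; tauto)

lemma card3_ne {α : Type*} [DecidableEq α] {a b c e : α}
    (h : 3 ≤ ({a, b, c, e} : Finset α).card) :
    ¬(a = e ∧ b = c) ∧ ¬(a = c ∧ b = e) := by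
  have key : ∀ u v : α, ({a, b, c, e} : Finset α) ⊆ {u, v} → False := by
    intro u v hsub
    have h1 := Finset.card_le_card hsub
    have h2 := card_pair_le u v
    omega
  constructor
  · rintro ⟨h1, h2⟩
    exact key a b (by subst h1; subst h2; intro x hx; simp at hx ⊢; tauto)
  · rintro ⟨h1, h2⟩
    exact key a b (by subst h1; subst h2; intro x hx; simp at hx ⊢; tauto)

lemma card2_eq {α : Type*} [DecidableEq α] [LinearOrder α] {a b c e : α}
    (h1 : a < b) (h2 : c < e) (hc : ({a, b, c, e} : Finset α).card = 2) :
    c = a ∧ e = b := by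
  have hsub : ({a, b} : Finset α) ⊆ {a, b, c, e} := by intro x hx; simp at hx ⊢; tauto
  have hp : ({a, b} : Finset α).card = 2 := Finset.card_pair (ne_of_lt h1)
  have heq : ({a, b, c, e} : Finset α) = {a, b} :=
    (Finset.eq_of_subset_of_card_le hsub (by omega)).symm
  have hcmem : c ∈ ({a, b} : Finset α) := by rw [← heq]; simp
  have hemem : e ∈ ({a, b} : Finset α) := by rw [← heq]; simp
  simp only [Finset.mem_insert, Finset.mem_singleton] at hcmem hemem
  rcases hcmem with h3 | h3 <;> rcases hemem with h4 | h4
  · rw [h3, h4] at h2; exact absurd h2 (lt_irrefl _)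
  · exact ⟨h3, h4⟩
  · rw [h3, h4] at h2; exact absurd h2 (lt_asymm h1)
  · rw [h3, h4] at h2; exact absurd h2 (lt_irrefl _)

/-- Estimates for `S(2)`, `S(3)`, `S(4)` with a universal constant. -/
theorem Ssum_estimates :
    ∃ C : ℝ, 0 < C ∧ ∀ (m : ℕ) (R : Matrix (Fin m) (Fin m) ℝ), IsCorrMatrix R →
      |Ssum R 2 - (m : ℝ) * ((m : ℝ) - 1) / 2| ≤ C * frobDistId R ^ 2 ∧
      Ssum R 3 ≤ C * ((m : ℝ) * frobDistId R ^ 2 + frobDistId R ^ 4) ∧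
      Ssum R 4 ≤ C * frobDistId R ^ 4 := by
  refine ⟨8, by norm_num, fun m R hR => ?_⟩
  obtain ⟨hpsd, hdiag⟩ := hR
  have hsym : ∀ a b, R b a = R a b := by
    intro a b
    have h := congrFun (congrFun hpsd.1.symm b) a
    simpa [Matrix.conjTranspose_apply] using h
  set d : Fin m → Fin m → ℝ := fun a b => if a = b then 0 else R a b with hd
  set F2 : ℝ := ∑ a, ∑ b, d a b ^ 2 with hF2
  have hF2nonneg : 0 ≤ F2 := by
    refine Finset.sum_nonneg fun a _ => Finset.sum_nonneg fun b _ => sq_nonneg _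
  have hfrob : frobDistId R ^ 2 = F2 := by
    rw [frobDistId, Real.sq_sqrt]
    · refine Finset.sum_congr rfl fun a _ => Finset.sum_congr rfl fun b _ => ?_
      rcases eq_or_ne a b with rfl | hab
      · simp [hd, hdiag a]
      · simp [hd, hab]
    · exact Finset.sum_nonneg fun a _ => Finset.sum_nonneg fun b _ => sq_nonneg _
  have hfrob4 : frobDistId R ^ 4 = F2 ^ 2 := by
    have : frobDistId R ^ 4 = (frobDistId R ^ 2) ^ 2 := by ring
    rw [this, hfrob]
  have hdsq1 : ∀ a b, d a b ^ 2 ≤ 1 := by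
    intro a b
    rcases eq_or_ne a b with rfl | hab
    · simp [hd]
    · simpa [hd, hab] using entry_sq_le_one hpsd hdiag a b
  have hdR : ∀ a b, a ≠ b → d a b = R a b := fun a b hab => by simp [hd, hab]
  have hdsym : ∀ a b, d b a = d a b := by
    intro a b
    rcases eq_or_ne a b with rfl | hab
    · rfl
    · simp [hd, hab, Ne.symm hab, hsym a b]
  -- ### the `S(2)` estimate
  have hS2 : |Ssum R 2 - (m : ℝ) * ((m : ℝ) - 1) / 2| ≤ 8 * frobDistId R ^ 2 := by
    have hset2 : (Finset.univ : Finset ((Fin m × Fin m) × (Fin m × Fin m))).filter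
        (fun x => x.1.1 < x.1.2 ∧ x.2.1 < x.2.2 ∧
          ({x.1.1, x.1.2, x.2.1, x.2.2} : Finset (Fin m)).card = 2)
        = ((Finset.univ : Finset (Fin m × Fin m)).filter (fun y => y.1 < y.2)).image
            (fun y => (y, y)) := by
      ext x
      simp only [Finset.mem_filter, Finset.mem_image, Finset.mem_univ, true_and]
      constructor
      · rintro ⟨h1, h2, hc⟩
        obtain ⟨hca, hcb⟩ := card2_eq h1 h2 hc
        exact ⟨x.1, h1, by rw [Prod.ext_iff]; exact ⟨rfl, (Prod.ext_iff).2 ⟨hca.symm, hcb.symm⟩⟩⟩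
      · rintro ⟨y, hy, rfl⟩
        refine ⟨hy, hy, ?_⟩
        have hset : ({y.1, y.2, y.1, y.2} : Finset (Fin m)) = {y.1, y.2} := by
          ext z; simp
        rw [hset]
        exact Finset.card_pair (ne_of_lt hy)
    have hinj : ∀ y ∈ (Finset.univ : Finset (Fin m × Fin m)).filter (fun y => y.1 < y.2),
        ∀ z ∈ (Finset.univ : Finset (Fin m × Fin m)).filter (fun y => y.1 < y.2),
        (fun y => (y, y)) y = (fun y => (y, y)) z → y = z := by
      intro y _ z _ h
      exact (Prod.ext_iff.1 h).1
    have hSsum2 : Ssum R 2 = ∑ y ∈ (Finset.univ : Finset (Fin m × Fin m)).filter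
        (fun y => y.1 < y.2), (d y.1 y.2 ^ 2 + 1) ^ 2 := by
      rw [Ssum, hset2, Finset.sum_image hinj]
      refine Finset.sum_congr rfl fun y hy => ?_
      simp only [Finset.mem_filter, Finset.mem_univ, true_and] at hy
      have hne : y.1 ≠ y.2 := ne_of_lt hy
      have hM : Mmom R y y = d y.1 y.2 ^ 2 + 1 := by
        rw [Mmom, hsym y.1 y.2, hdiag, hdiag, hdR _ _ hne]
        ring
      rw [hM]
    have hcount : ∑ y ∈ (Finset.univ : Finset (Fin m × Fin m)).filter
        (fun y => y.1 < y.2), (1:ℝ) = (m:ℝ) * ((m:ℝ) - 1) / 2 := by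
      have e1 : ∑ y ∈ (Finset.univ : Finset (Fin m × Fin m)).filter (fun y => y.1 < y.2), (1:ℝ)
          = ∑ y : Fin m × Fin m, (if y.1 < y.2 then (1:ℝ) else 0) := by
        rw [Finset.sum_filter]
      have e2 : ∑ y : Fin m × Fin m, (if y.1 < y.2 then (1:ℝ) else 0)
          = ∑ y : Fin m × Fin m, (if y.2 < y.1 then (1:ℝ) else 0) := by
        exact Fintype.sum_equiv (Equiv.prodComm _ _) _ _ (fun y => rfl)
      have e3 : ∑ y : Fin m × Fin m, ((if y.1 < y.2 then (1:ℝ) else 0)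
          + (if y.2 < y.1 then (1:ℝ) else 0)) = (m:ℝ) * (m:ℝ) - (m:ℝ) := by
        have hpt : ∀ y : Fin m × Fin m, (if y.1 < y.2 then (1:ℝ) else 0)
            + (if y.2 < y.1 then (1:ℝ) else 0) = 1 - (if y.1 = y.2 then (1:ℝ) else 0) := by
          intro y
          rcases lt_trichotomy y.1 y.2 with h | h | h
          · simp [h, ne_of_lt h, lt_asymm h]
          · simp [h, lt_irrefl]
          · simp [h, ne_of_gt h, lt_asymm h]
        simp only [hpt]
        rw [Finset.sum_sub_distrib]
        have c1 : ∑ _y : Fin m × Fin m, (1:ℝ) = (m:ℝ) * (m:ℝ) := by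
          simp [Finset.sum_const, Finset.card_univ, mul_comm]
        have c2 : ∑ y : Fin m × Fin m, (if y.1 = y.2 then (1:ℝ) else 0) = (m:ℝ) := by
          rw [Fintype.sum_prod_type]
          simp [Finset.sum_ite_eq]
        rw [c1, c2]
      rw [e1]
      have := e3
      rw [Finset.sum_add_distrib, ← e2] at this
      linarith
    have hdiff : Ssum R 2 - (m:ℝ) * ((m:ℝ) - 1) / 2
        = ∑ y ∈ (Finset.univ : Finset (Fin m × Fin m)).filter (fun y => y.1 < y.2),
          ((d y.1 y.2 ^ 2 + 1) ^ 2 - 1) := by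
      rw [hSsum2, ← hcount, Finset.sum_sub_distrib]
    have hlow : 0 ≤ Ssum R 2 - (m:ℝ) * ((m:ℝ) - 1) / 2 := by
      rw [hdiff]
      refine Finset.sum_nonneg fun y _ => ?_
      nlinarith [sq_nonneg (d y.1 y.2)]
    have hup : Ssum R 2 - (m:ℝ) * ((m:ℝ) - 1) / 2 ≤ 3 * F2 := by
      rw [hdiff]
      have step1 : ∑ y ∈ (Finset.univ : Finset (Fin m × Fin m)).filter (fun y => y.1 < y.2),
          ((d y.1 y.2 ^ 2 + 1) ^ 2 - 1)
          ≤ ∑ y ∈ (Finset.univ : Finset (Fin m × Fin m)).filter (fun y => y.1 < y.2),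
            3 * d y.1 y.2 ^ 2 := by
        refine Finset.sum_le_sum fun y _ => ?_
        nlinarith [hdsq1 y.1 y.2, sq_nonneg (d y.1 y.2)]
      have step2 : ∑ y ∈ (Finset.univ : Finset (Fin m × Fin m)).filter (fun y => y.1 < y.2),
          3 * d y.1 y.2 ^ 2 ≤ ∑ y : Fin m × Fin m, 3 * d y.1 y.2 ^ 2 := by
        refine Finset.sum_le_sum_of_subset_of_nonneg (Finset.filter_subset _ _) ?_
        intro y _ _
        positivity
      have step3 : ∑ y : Fin m × Fin m, 3 * d y.1 y.2 ^ 2 = 3 * F2 := by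
        rw [← Finset.mul_sum, hF2, Fintype.sum_prod_type]
      linarith
    rw [abs_of_nonneg hlow, hfrob]
    linarith
  -- ### the `S(3)` estimate
  have hS3 : Ssum R 3 ≤ 8 * ((m : ℝ) * frobDistId R ^ 2 + frobDistId R ^ 4) := by
    have hbound : ∀ x ∈ (Finset.univ : Finset ((Fin m × Fin m) × (Fin m × Fin m))).filter
        (fun x => x.1.1 < x.1.2 ∧ x.2.1 < x.2.2 ∧
          ({x.1.1, x.1.2, x.2.1, x.2.2} : Finset (Fin m)).card = 3),
        Mmom R x.1 x.2 ^ 2 ≤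
          2 * (if x.1.1 = x.2.2 then d x.1.2 x.2.1 ^ 2 else 0)
          + 2 * (if x.1.2 = x.2.1 then d x.1.1 x.2.2 ^ 2 else 0)
          + 2 * (d x.1.1 x.2.2 ^ 2 * d x.1.2 x.2.1 ^ 2)
          + 2 * (if x.1.1 = x.2.1 then d x.1.2 x.2.2 ^ 2 else 0)
          + 2 * (if x.1.2 = x.2.2 then d x.1.1 x.2.1 ^ 2 else 0)
          + 2 * (d x.1.1 x.2.1 ^ 2 * d x.1.2 x.2.2 ^ 2) := by
      intro x hx
      simp only [Finset.mem_filter, Finset.mem_univ, true_and] at hx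
      obtain ⟨h1, h2, hc⟩ := hx
      obtain ⟨hne1, hne2⟩ := card3_ne (le_of_eq hc.symm)
      have hA : (R x.1.1 x.2.2 * R x.1.2 x.2.1) ^ 2 ≤
          (if x.1.1 = x.2.2 then d x.1.2 x.2.1 ^ 2 else 0)
          + (if x.1.2 = x.2.1 then d x.1.1 x.2.2 ^ 2 else 0)
          + d x.1.1 x.2.2 ^ 2 * d x.1.2 x.2.1 ^ 2 := by
        by_cases ha : x.1.1 = x.2.2 <;> by_cases hb : x.1.2 = x.2.1
        · exact absurd ⟨ha, hb⟩ hne1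
        · have e1 : R x.1.1 x.2.2 = 1 := by rw [ha, hdiag]
          have e2 : d x.1.1 x.2.2 = 0 := by simp [hd, ha]
          rw [e1, hdR _ _ hb] at *
          simp [if_pos ha, if_neg hb, e2]
        · have e1 : R x.1.2 x.2.1 = 1 := by rw [hb, hdiag]
          have e2 : d x.1.2 x.2.1 = 0 := by simp [hd, hb]
          rw [e1, hdR _ _ ha] at *
          simp [if_neg ha, if_pos hb, e2]
        · rw [hdR _ _ ha, hdR _ _ hb]
          simp only [if_neg ha, if_neg hb]
          nlinarith [sq_nonneg (d x.1.1 x.2.2 * d x.1.2 x.2.1)]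
      have hB : (R x.1.1 x.2.1 * R x.1.2 x.2.2) ^ 2 ≤
          (if x.1.1 = x.2.1 then d x.1.2 x.2.2 ^ 2 else 0)
          + (if x.1.2 = x.2.2 then d x.1.1 x.2.1 ^ 2 else 0)
          + d x.1.1 x.2.1 ^ 2 * d x.1.2 x.2.2 ^ 2 := by
        by_cases ha : x.1.1 = x.2.1 <;> by_cases hb : x.1.2 = x.2.2
        · exact absurd ⟨ha, hb⟩ hne2
        · have e1 : R x.1.1 x.2.1 = 1 := by rw [ha, hdiag]
          have e2 : d x.1.1 x.2.1 = 0 := by simp [hd, ha]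
          rw [e1, hdR _ _ hb] at *
          simp [if_pos ha, if_neg hb, e2]
        · have e1 : R x.1.2 x.2.2 = 1 := by rw [hb, hdiag]
          have e2 : d x.1.2 x.2.2 = 0 := by simp [hd, hb]
          rw [e1, hdR _ _ ha] at *
          simp [if_neg ha, if_pos hb, e2]
        · rw [hdR _ _ ha, hdR _ _ hb]
          simp only [if_neg ha, if_neg hb]
          nlinarith [sq_nonneg (d x.1.1 x.2.1 * d x.1.2 x.2.2)]
      have hM2 : Mmom R x.1 x.2 ^ 2 ≤ 2 * (R x.1.1 x.2.2 * R x.1.2 x.2.1) ^ 2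
          + 2 * (R x.1.1 x.2.1 * R x.1.2 x.2.2) ^ 2 := by
        rw [Mmom]
        nlinarith [sq_nonneg (R x.1.1 x.2.2 * R x.1.2 x.2.1 - R x.1.1 x.2.1 * R x.1.2 x.2.2)]
      linarith
    have hstep : Ssum R 3 ≤ ∑ x : (Fin m × Fin m) × (Fin m × Fin m),
        (2 * (if x.1.1 = x.2.2 then d x.1.2 x.2.1 ^ 2 else 0)
          + 2 * (if x.1.2 = x.2.1 then d x.1.1 x.2.2 ^ 2 else 0)
          + 2 * (d x.1.1 x.2.2 ^ 2 * d x.1.2 x.2.1 ^ 2)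
          + 2 * (if x.1.1 = x.2.1 then d x.1.2 x.2.2 ^ 2 else 0)
          + 2 * (if x.1.2 = x.2.2 then d x.1.1 x.2.1 ^ 2 else 0)
          + 2 * (d x.1.1 x.2.1 ^ 2 * d x.1.2 x.2.2 ^ 2)) := by
      refine le_trans (Finset.sum_le_sum hbound) ?_
      refine Finset.sum_le_sum_of_subset_of_nonneg (Finset.filter_subset _ _) ?_
      intro x _ _
      have n1 : (0:ℝ) ≤ (if x.1.1 = x.2.2 then d x.1.2 x.2.1 ^ 2 else 0) := by positivity
      have n2 : (0:ℝ) ≤ (if x.1.2 = x.2.1 then d x.1.1 x.2.2 ^ 2 else 0) := by positivity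
      have n3 : (0:ℝ) ≤ (if x.1.1 = x.2.1 then d x.1.2 x.2.2 ^ 2 else 0) := by positivity
      have n4 : (0:ℝ) ≤ (if x.1.2 = x.2.2 then d x.1.1 x.2.1 ^ 2 else 0) := by positivity
      have n5 : (0:ℝ) ≤ d x.1.1 x.2.2 ^ 2 * d x.1.2 x.2.1 ^ 2 := by positivity
      have n6 : (0:ℝ) ≤ d x.1.1 x.2.1 ^ 2 * d x.1.2 x.2.2 ^ 2 := by positivity
      linarith
    have hval : ∑ x : (Fin m × Fin m) × (Fin m × Fin m),
        (2 * (if x.1.1 = x.2.2 then d x.1.2 x.2.1 ^ 2 else 0)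
          + 2 * (if x.1.2 = x.2.1 then d x.1.1 x.2.2 ^ 2 else 0)
          + 2 * (d x.1.1 x.2.2 ^ 2 * d x.1.2 x.2.1 ^ 2)
          + 2 * (if x.1.1 = x.2.1 then d x.1.2 x.2.2 ^ 2 else 0)
          + 2 * (if x.1.2 = x.2.2 then d x.1.1 x.2.1 ^ 2 else 0)
          + 2 * (d x.1.1 x.2.1 ^ 2 * d x.1.2 x.2.2 ^ 2))
        = 2 * ((m:ℝ) * F2) + 2 * ((m:ℝ) * F2) + 2 * (F2 * F2)
          + 2 * ((m:ℝ) * F2) + 2 * ((m:ℝ) * F2) + 2 * (F2 * F2) := by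
      simp only [Finset.sum_add_distrib, ← Finset.mul_sum]
      rw [sum_diag1 (fun a b => d a b ^ 2), sum_diag2 (fun a b => d a b ^ 2),
        sum_diag3 (fun a b => d a b ^ 2), sum_diag4 (fun a b => d a b ^ 2),
        sum_factor1 (fun a b => d a b ^ 2) (fun a b => d a b ^ 2),
        sum_factor2 (fun a b => d a b ^ 2) (fun a b => d a b ^ 2)]
    rw [hval] at hstep
    rw [hfrob, hfrob4]
    have hmF2 : (0:ℝ) ≤ (m:ℝ) * F2 := mul_nonneg (Nat.cast_nonneg m) hF2nonneg
    nlinarith [hF2nonneg, hmF2, sq_nonneg F2]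
  -- ### the `S(4)` estimate
  have hS4 : Ssum R 4 ≤ 8 * frobDistId R ^ 4 := by
    have hbound : ∀ x ∈ (Finset.univ : Finset ((Fin m × Fin m) × (Fin m × Fin m))).filter
        (fun x => x.1.1 < x.1.2 ∧ x.2.1 < x.2.2 ∧
          ({x.1.1, x.1.2, x.2.1, x.2.2} : Finset (Fin m)).card = 4),
        Mmom R x.1 x.2 ^ 2 ≤
          2 * (d x.1.1 x.2.2 ^ 2 * d x.1.2 x.2.1 ^ 2)
            + 2 * (d x.1.1 x.2.1 ^ 2 * d x.1.2 x.2.2 ^ 2) := by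
      intro x hx
      simp only [Finset.mem_filter, Finset.mem_univ, true_and] at hx
      obtain ⟨h1, h2, hc⟩ := hx
      obtain ⟨hab, hac, hae, hbc, hbe, hce⟩ := card4_ne hc
      have hM : Mmom R x.1 x.2
          = d x.1.1 x.2.2 * d x.1.2 x.2.1 + d x.1.1 x.2.1 * d x.1.2 x.2.2 := by
        rw [Mmom, hdR _ _ hae, hdR _ _ hbc, hdR _ _ hac, hdR _ _ hbe]
      rw [hM]
      nlinarith [sq_nonneg (d x.1.1 x.2.2 * d x.1.2 x.2.1 - d x.1.1 x.2.1 * d x.1.2 x.2.2)]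
    have hstep : Ssum R 4 ≤ ∑ x : (Fin m × Fin m) × (Fin m × Fin m),
        (2 * (d x.1.1 x.2.2 ^ 2 * d x.1.2 x.2.1 ^ 2)
          + 2 * (d x.1.1 x.2.1 ^ 2 * d x.1.2 x.2.2 ^ 2)) := by
      refine le_trans (Finset.sum_le_sum hbound) ?_
      refine Finset.sum_le_sum_of_subset_of_nonneg (Finset.filter_subset _ _) ?_
      intro x _ _
      positivity
    have hval : ∑ x : (Fin m × Fin m) × (Fin m × Fin m),
        (2 * (d x.1.1 x.2.2 ^ 2 * d x.1.2 x.2.1 ^ 2)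
          + 2 * (d x.1.1 x.2.1 ^ 2 * d x.1.2 x.2.2 ^ 2))
        = 2 * (F2 * F2) + 2 * (F2 * F2) := by
      rw [Finset.sum_add_distrib, ← Finset.mul_sum, ← Finset.mul_sum,
        sum_factor1 (fun a b => d a b ^ 2) (fun a b => d a b ^ 2),
        sum_factor2 (fun a b => d a b ^ 2) (fun a b => d a b ^ 2)]
    rw [hval] at hstep
    rw [hfrob4]
    nlinarith [hF2nonneg]
  exact ⟨hS2, hS3, hS4⟩
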